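/- Let k ≥ 2 and let C be the binary punctured Hadamard (Simplex) code of dimension k: the code whose coordinates are indexed by the nonzero vectors b ∈ (𝔽₂)^k and whose codewords are the maps b ↦ ⟨m, b⟩ = Σ_{j=1}^{k} m_j b_j (mod 2) as m ranges over (𝔽₂)^k; its length is n = 2^k − 1. Then for every integer ℓ with 1 ≤ ℓ ≤ (n−1)/2 and every set S of ℓ coordinates, there exists a set Γ of at most ℓ + 1 coordinates, disjoint from S, such that any two codewords of C agreeing on all coordinates in Γ agree on all coordinates in S. In particular, C has (ℓ+1, ℓ)-cooperative locality for every ℓ ≤ (n−1)/2. -/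

import Mathlib

open Finset

set_option maxHeartbeats 1600000

private lemma span_vanish {k : ℕ} (d : Fin k → ZMod 2) (s : Set (Fin k → ZMod 2))
    (h : ∀ v ∈ s, ∑ j, d j * v j = 0) {b : Fin k → ZMod 2}
    (hb : b ∈ Submodule.span (ZMod 2) s) : ∑ j, d j * b j = 0 := by
  induction hb using Submodule.span_induction with
  | mem x hx => exact h x hx
  | zero => simp
  | add x y _ _ hx hy => simp [Pi.add_apply, mul_add, Finset.sum_add_distrib, hx, hy]
  | smul c x _ hx =>
    have h' : ∀ j, d j * (c • x) j = c * (d j * x j) := by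
      intro j; simp [Pi.smul_apply, smul_eq_mul]; ring
    simp only [h', ← Finset.mul_sum, hx, mul_zero]

theorem stmt_15 (k : ℕ) (hk : 2 ≤ k) (n : ℕ) (hn : n = 2 ^ k - 1)
    (ℓ : ℕ) (hℓ1 : 1 ≤ ℓ) (hℓ2 : ℓ ≤ (n - 1) / 2)
    (S : Finset {b : Fin k → ZMod 2 // b ≠ 0}) (hS : S.card = ℓ) :
    ∃ Γ : Finset {b : Fin k → ZMod 2 // b ≠ 0}, Disjoint Γ S ∧ Γ.card ≤ ℓ + 1 ∧
      ∀ m₁ m₂ : Fin k → ZMod 2,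
        (∀ b ∈ Γ, ∑ j, m₁ j * b.val j = ∑ j, m₂ j * b.val j) →
        ∀ b ∈ S, ∑ j, m₁ j * b.val j = ∑ j, m₂ j * b.val j := by
  classical
  set V := Fin k → ZMod 2
  have h2k : 2 ^ k = 2 * 2 ^ (k - 1) := by
    rw [← pow_succ']; congr 1; omega
  have hkpos : 1 ≤ 2 ^ (k - 1) := Nat.one_le_two_pow
  have hℓbound : ℓ ≤ 2 ^ (k - 1) - 1 := by
    subst hn; omega
  set Svals : Finset V := S.image Subtype.val with hSvdef
  have hSvcard : Svals.card = ℓ := by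
    rw [hSvdef, Finset.card_image_of_injective _ Subtype.val_injective, hS]
  have hSvmem : ∀ b ∈ S, b.val ∈ Svals := fun b hb => Finset.mem_image_of_mem _ hb
  have h0Sv : (0 : V) ∉ Svals := by
    intro h
    obtain ⟨b, _, hb⟩ := Finset.mem_image.mp h
    exact b.2 hb
  -- key reduction: find Γ disjoint, small, with S ⊆ span of Γ's values
  suffices h : ∃ Γ : Finset {b : V // b ≠ 0}, Disjoint Γ S ∧ Γ.card ≤ ℓ + 1 ∧
      ∀ b ∈ S, b.val ∈ Submodule.span (ZMod 2) (↑(Γ.image Subtype.val) : Set V) by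
    obtain ⟨Γ, hdisj, hcard, hspan⟩ := h
    refine ⟨Γ, hdisj, hcard, fun m₁ m₂ hH b hb => ?_⟩
    have hvan : ∀ v ∈ (↑(Γ.image Subtype.val) : Set V), ∑ j, (m₁ - m₂) j * v j = 0 := by
      intro v hv
      obtain ⟨c, hc, hcv⟩ := Finset.mem_image.mp (by exact_mod_cast hv)
      have := hH c hc
      subst hcv
      simp only [Pi.sub_apply, sub_mul, Finset.sum_sub_distrib, this, sub_self]
    have := span_vanish (m₁ - m₂) _ hvan (hspan b hb)
    simp only [Pi.sub_apply, sub_mul, Finset.sum_sub_distrib, sub_eq_zero] at this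
    exact this
  by_cases hW : Submodule.span (ZMod 2) (↑Svals : Set V) = ⊤
  · -- spanning case: take a basis from the complement
    have hfr : Module.finrank (ZMod 2) V = k := by
      simp [V, Module.finrank_pi]
    have hkℓ : k ≤ ℓ := by
      have h1 : Module.finrank (ZMod 2) (Submodule.span (ZMod 2) (↑Svals : Set V)) ≤ Svals.card := by
        simpa using finrank_span_le_card (R := ZMod 2) (↑Svals : Set V)
      rw [hW, finrank_top, hfr, hSvcard] at h1
      exact h1
    set Tvf : Finset V := Finset.univ \ insert 0 Svals with hTdef
    have hTmem : ∀ v ∈ Tvf, v ≠ 0 ∧ v ∉ Svals := by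
      intro v hv
      rw [hTdef, Finset.mem_sdiff, Finset.mem_insert] at hv
      exact ⟨fun h => hv.2 (Or.inl h), fun h => hv.2 (Or.inr h)⟩
    have hcardV : Fintype.card V = 2 ^ k := by simp [V]
    have hTcard : Tvf.card = 2 ^ k - (ℓ + 1) := by
      rw [hTdef, Finset.card_sdiff_of_subset (Finset.subset_univ _), Finset.card_univ, hcardV,
        Finset.card_insert_of_notMem h0Sv, hSvcard]
    set P := Submodule.span (ZMod 2) (↑Tvf : Set V) with hPdef
    have hPtop : P = ⊤ := by
      by_contra h
      have hlt : Module.finrank (ZMod 2) P < k := by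
        have := Submodule.finrank_lt (K := ZMod 2) (V := V) h
        rwa [hfr] at this
      have hcardP : Fintype.card P = 2 ^ Module.finrank (ZMod 2) P := by
        have := Module.card_eq_pow_finrank (K := ZMod 2) (V := P)
        rwa [ZMod.card] at this
      have hsub : ∀ x ∈ insert (0 : V) Tvf, x ∈ P := by
        intro x hx
        rcases Finset.mem_insert.mp hx with h | h
        · rw [h]; exact P.zero_mem
        · exact Submodule.subset_span h
      have hinj : Function.Injective
          (fun x : (insert (0 : V) Tvf : Finset V) => (⟨x.1, hsub x.1 x.2⟩ : P)) := by
        intro a b hab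
        simp only [Subtype.mk.injEq] at hab
        exact Subtype.ext hab
      have h3 : (insert (0 : V) Tvf).card ≤ Fintype.card P := by
        rw [← Fintype.card_coe]
        exact Fintype.card_le_of_injective _ hinj
      have h0T : (0 : V) ∉ Tvf := by
        intro h; exact (hTmem 0 h).1 rfl
      rw [Finset.card_insert_of_notMem h0T, hTcard, hcardP] at h3
      have h4 : 2 ^ Module.finrank (ZMod 2) P ≤ 2 ^ (k - 1) :=
        Nat.pow_le_pow_right (by norm_num) (by omega)
      omega
    obtain ⟨bset, hbsub, hbspan, hblin⟩ :=
      exists_linearIndependent (ZMod 2) (↑Tvf : Set V)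
    have hfin : bset.Finite := Set.Finite.subset Tvf.finite_toSet hbsub
    have hbcard : hfin.toFinset.card ≤ k := by
      have hlin' : LinearIndependent (ZMod 2)
          ((Subtype.val : bset → V) ∘
            (fun x : hfin.toFinset => ⟨x.1, hfin.mem_toFinset.mp x.2⟩)) := by
        apply hblin.comp
        intro a b hab
        simp only [Subtype.mk.injEq] at hab
        exact Subtype.ext hab
      have := hlin'.fintype_card_le_finrank
      rwa [Fintype.card_coe, hfr] at this
    have hbne : ∀ v ∈ bset, v ≠ 0 := fun v hv => (hTmem v (hbsub hv)).1
    set Γ : Finset {b : V // b ≠ 0} :=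
      hfin.toFinset.attach.image
        (fun v => ⟨v.1, hbne v.1 (hfin.mem_toFinset.mp v.2)⟩) with hΓdef
    have hΓvals : ∀ x ∈ Γ, x.val ∈ bset := by
      intro x hx
      rw [hΓdef, Finset.mem_image] at hx
      obtain ⟨v, hv, hvx⟩ := hx
      rw [← hvx]
      exact hfin.mem_toFinset.mp v.2
    refine ⟨Γ, ?_, ?_, ?_⟩
    · rw [Finset.disjoint_left]
      intro x hx hxS
      exact (hTmem x.val (hbsub (hΓvals x hx))).2 (hSvmem x hxS)
    · calc Γ.card ≤ hfin.toFinset.attach.card := Finset.card_image_le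
        _ = hfin.toFinset.card := Finset.card_attach
        _ ≤ k := hbcard
        _ ≤ ℓ + 1 := by omega
    · intro b hb
      have hsub2 : bset ⊆ (↑(Γ.image Subtype.val) : Set V) := by
        intro v hv
        simp only [Finset.coe_image, Set.mem_image, Finset.mem_coe]
        refine ⟨⟨v, hbne v hv⟩, ?_, rfl⟩
        rw [hΓdef, Finset.mem_image]
        exact ⟨⟨v, hfin.mem_toFinset.mpr hv⟩, Finset.mem_attach _ _, rfl⟩
      have : b.val ∈ Submodule.span (ZMod 2) bset := by
        rw [hbspan, ← hPdef, hPtop]; trivial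
      exact Submodule.span_mono hsub2 this
  · -- non-spanning case: pick v outside the span
    have hv : ∃ v : V, v ∉ Submodule.span (ZMod 2) (↑Svals : Set V) := by
      by_contra h
      push_neg at h
      exact hW (Submodule.eq_top_iff'.mpr h)
    obtain ⟨v, hv⟩ := hv
    have hv0 : v ≠ 0 := fun h => hv (h ▸ Submodule.zero_mem _)
    have hmemspan : ∀ b ∈ S, b.val ∈ Submodule.span (ZMod 2) (↑Svals : Set V) :=
      fun b hb => Submodule.subset_span (hSvmem b hb)
    have hvb0 : ∀ b ∈ S, v + b.val ≠ 0 := by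
      intro b hb h
      have : v = -b.val := by linear_combination (norm := module) h
      exact hv (this ▸ Submodule.neg_mem _ (hmemspan b hb))
    set Γ : Finset {b : V // b ≠ 0} :=
      insert ⟨v, hv0⟩ (S.attach.image fun b => ⟨v + b.1.val, hvb0 b.1 b.2⟩) with hΓdef
    refine ⟨Γ, ?_, ?_, ?_⟩
    · rw [Finset.disjoint_left]
      intro x hx hxS
      rw [hΓdef, Finset.mem_insert] at hx
      rcases hx with h | h
      · apply hv
        rw [h] at hxS
        exact Submodule.subset_span (hSvmem _ hxS)
      · rw [Finset.mem_image] at h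
        obtain ⟨c, _, hc⟩ := h
        apply hv
        have h1 : v + c.1.val ∈ Submodule.span (ZMod 2) (↑Svals : Set V) := by
          rw [show v + c.1.val = x.val from congrArg Subtype.val hc]
          exact Submodule.subset_span (hSvmem x hxS)
        have h2 := hmemspan c.1 c.2
        have : v = (v + c.1.val) - c.1.val := by ring
        rw [this]
        exact Submodule.sub_mem _ h1 h2
    · calc Γ.card ≤ (S.attach.image fun b : {x // x ∈ S} =>
            (⟨v + b.1.val, hvb0 b.1 b.2⟩ : {b : V // b ≠ 0})).card + 1 :=
          Finset.card_insert_le _ _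
        _ ≤ S.attach.card + 1 := by gcongr; exact Finset.card_image_le
        _ = ℓ + 1 := by rw [Finset.card_attach, hS]
    · intro b hb
      have hvmem : v ∈ (↑(Γ.image Subtype.val) : Set V) := by
        simp only [Finset.coe_image, Set.mem_image, Finset.mem_coe]
        exact ⟨⟨v, hv0⟩, by rw [hΓdef]; exact Finset.mem_insert_self _ _, rfl⟩
      have hvbmem : v + b.val ∈ (↑(Γ.image Subtype.val) : Set V) := by
        simp only [Finset.coe_image, Set.mem_image, Finset.mem_coe]
        refine ⟨⟨v + b.val, hvb0 b hb⟩, ?_, rfl⟩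
        rw [hΓdef]
        refine Finset.mem_insert_of_mem (Finset.mem_image.mpr ⟨⟨b, hb⟩, Finset.mem_attach _ _, rfl⟩)
      have : b.val = (v + b.val) - v := by ring
      rw [this]
      exact Submodule.sub_mem _ (Submodule.subset_span hvbmem) (Submodule.subset_span hvmem)
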